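/- Suppose Σ, Σ' ∈ P(X) are irreducible collections of partial splits and C is an X-cycle. If Σ' is obtained from Σ by a single application of the M-rule θ_M, then Σ is displayed by C if and only if Σ' is displayed by C. -/

import Mathlib

/-!
Common definitions: partial splits of a finite set `X`, modelled as unordered
pairs (`Sym2`) of nonempty disjoint subsets of `X`; the `M`-, `Y`- and `Z`-
closure rules; weak compatibility; `X`-cycles and display; split closure
sequences and split closures.
-/

variable {X : Type*}

/-- `S` is a partial split of `X`: an unordered pair of nonempty disjoint subsets of `X`. -/
def IsPartialSplit (S : Sym2 (Set X)) : Prop :=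
  ∃ A B : Set X, S = s(A, B) ∧ A.Nonempty ∧ B.Nonempty ∧ Disjoint A B

/-- `S` is a full split of `X`: a partial split whose two parts cover `X`. -/
def IsFullSplit (S : Sym2 (Set X)) : Prop :=
  ∃ A B : Set X, S = s(A, B) ∧ A.Nonempty ∧ B.Nonempty ∧ Disjoint A B ∧ A ∪ B = Set.univ

/-- The partial split `S` extends the partial split `T`. -/
def SplitExtends (S T : Sym2 (Set X)) : Prop :=
  ∃ A B C D : Set X, S = s(A, B) ∧ T = s(C, D) ∧ C ⊆ A ∧ D ⊆ B

/-- `Sig ⪯ Sig'`: every partial split of `Sig` is extended by one of `Sig'`. -/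
def Preceq (Sig Sig' : Set (Sym2 (Set X))) : Prop :=
  ∀ S ∈ Sig, ∃ T ∈ Sig', SplitExtends T S

/-- `Sig⁻`: the set obtained from `Sig` by removing all redundant partial splits,
i.e. those extended by a different element of `Sig`. -/
def sreduce (Sig : Set (Sym2 (Set X))) : Set (Sym2 (Set X)) :=
  {S | S ∈ Sig ∧ ¬ ∃ T ∈ Sig, T ≠ S ∧ SplitExtends T S}

/-- `Sig ∈ P(X)`: `Sig` is an irreducible collection of partial splits of `X`. -/
def InPX (Sig : Set (Sym2 (Set X))) : Prop :=
  (∀ S ∈ Sig, IsPartialSplit S) ∧ sreduce Sig = Sig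

/-- Two partial splits are compatible if some part of one is disjoint from some part
of the other. -/
def SplitCompatible (S T : Sym2 (Set X)) : Prop :=
  ∃ A B C D : Set X, S = s(A, B) ∧ T = s(C, D) ∧ A ∩ C = ∅

/-- Weak compatibility of a (multi)triple of partial splits: for every choice of parts,
one of the four distinguished triple intersections is empty. -/
def WeaklyCompatTriple (S1 S2 S3 : Sym2 (Set X)) : Prop :=
  ∀ A1 B1 A2 B2 A3 B3 : Set X,
    S1 = s(A1, B1) → S2 = s(A2, B2) → S3 = s(A3, B3) →
    A1 ∩ A2 ∩ A3 = ∅ ∨ B1 ∩ B2 ∩ A3 = ∅ ∨ B1 ∩ A2 ∩ B3 = ∅ ∨ A1 ∩ B2 ∩ B3 = ∅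

/-- A collection of partial splits is weakly compatible if every three of its members are. -/
def WeaklyCompatible (Sig : Set (Sym2 (Set X))) : Prop :=
  ∀ S1 ∈ Sig, ∀ S2 ∈ Sig, ∀ S3 ∈ Sig, WeaklyCompatTriple S1 S2 S3

/-- Condition of the `M`-rule for the parts `A1|B1`, `A2|B2`. -/
def mCond (A1 B1 A2 B2 : Set X) : Prop :=
  (A1 ∩ A2).Nonempty ∧ (B1 ∩ B2).Nonempty

/-- Output of the `M`-rule applied with respect to the parts `A1|B1`, `A2|B2`. -/
def mOut (A1 B1 A2 B2 : Set X) : Set (Sym2 (Set X)) :=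
  {s(A1, B1), s(A2, B2), s(A1 ∩ A2, B1 ∪ B2), s(B1 ∩ B2, A1 ∪ A2)}

/-- Condition of the `Y`-rule for the parts `A1|B1`, `A2|B2`, `A3|B3`. -/
def yCond (A1 B1 A2 B2 A3 B3 : Set X) : Prop :=
  (A1 ∩ A2 ∩ A3).Nonempty ∧ (B1 ∩ B2 ∩ A3).Nonempty ∧
    (B1 ∩ A2 ∩ B3).Nonempty ∧ A1 ∩ B2 ∩ B3 = ∅

/-- Output of the `Y`-rule applied with respect to the parts `A1|B1`, `A2|B2`, `A3|B3`. -/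
def yOut (A1 B1 A2 B2 A3 B3 : Set X) : Set (Sym2 (Set X)) :=
  {s(B1 ∪ (B2 ∩ B3), A1), s(A2 ∪ (A1 ∩ B3), B2), s(A3 ∪ (A1 ∩ B2), B3)}

/-- Condition of the `Z`-rule for the parts `A1|B1`, `A2|B2`. -/
def zCond (A1 B1 A2 B2 : Set X) : Prop :=
  (A1 ∩ A2).Nonempty ∧ (A2 ∩ B1).Nonempty ∧ (B1 ∩ B2).Nonempty ∧ A1 ∩ B2 = ∅

/-- Output of the `Z`-rule applied with respect to the parts `A1|B1`, `A2|B2`. -/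
def zOut (A1 B1 A2 B2 : Set X) : Set (Sym2 (Set X)) :=
  {s(B1 ∪ B2, A1), s(B2, A1 ∪ A2)}

/-- `Sig'` is obtained from `Sig` by a single application of the `Y`-rule. -/
def yStep (Sig Sig' : Set (Sym2 (Set X))) : Prop :=
  ∃ A1 B1 A2 B2 A3 B3 : Set X,
    s(A1, B1) ∈ Sig ∧ s(A2, B2) ∈ Sig ∧ s(A3, B3) ∈ Sig ∧
    s(A1, B1) ≠ s(A2, B2) ∧ s(A1, B1) ≠ s(A3, B3) ∧ s(A2, B2) ≠ s(A3, B3) ∧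
    yCond A1 B1 A2 B2 A3 B3 ∧
    Sig' = sreduce (Sig ∪ yOut A1 B1 A2 B2 A3 B3)

/-- `Sig'` is obtained from `Sig` by a single application of the `M`-rule. -/
def mStep (Sig Sig' : Set (Sym2 (Set X))) : Prop :=
  ∃ A1 B1 A2 B2 : Set X,
    s(A1, B1) ∈ Sig ∧ s(A2, B2) ∈ Sig ∧ s(A1, B1) ≠ s(A2, B2) ∧
    mCond A1 B1 A2 B2 ∧
    Sig' = sreduce (Sig ∪ mOut A1 B1 A2 B2)

/-- `Sig'` is obtained from `Sig` by a single non-trivial application of the `Y`-rule. -/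
def yStepNT (Sig Sig' : Set (Sym2 (Set X))) : Prop :=
  ∃ A1 B1 A2 B2 A3 B3 : Set X,
    s(A1, B1) ∈ Sig ∧ s(A2, B2) ∈ Sig ∧ s(A3, B3) ∈ Sig ∧
    s(A1, B1) ≠ s(A2, B2) ∧ s(A1, B1) ≠ s(A3, B3) ∧ s(A2, B2) ≠ s(A3, B3) ∧
    yCond A1 B1 A2 B2 A3 B3 ∧
    ¬ Preceq (sreduce (yOut A1 B1 A2 B2 A3 B3)) Sig ∧
    Sig' = sreduce (Sig ∪ yOut A1 B1 A2 B2 A3 B3)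

/-- `Sig'` is obtained from `Sig` by a single non-trivial application of the `M`-rule. -/
def mStepNT (Sig Sig' : Set (Sym2 (Set X))) : Prop :=
  ∃ A1 B1 A2 B2 : Set X,
    s(A1, B1) ∈ Sig ∧ s(A2, B2) ∈ Sig ∧ s(A1, B1) ≠ s(A2, B2) ∧
    mCond A1 B1 A2 B2 ∧
    ¬ Preceq (sreduce (mOut A1 B1 A2 B2)) Sig ∧
    Sig' = sreduce (Sig ∪ mOut A1 B1 A2 B2)

/-- `Sig` is closed under the `Y`-rule: every application of the `Y`-rule to `Sig` is trivial. -/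
def yClosed (Sig : Set (Sym2 (Set X))) : Prop :=
  ∀ A1 B1 A2 B2 A3 B3 : Set X,
    s(A1, B1) ∈ Sig → s(A2, B2) ∈ Sig → s(A3, B3) ∈ Sig →
    s(A1, B1) ≠ s(A2, B2) → s(A1, B1) ≠ s(A3, B3) → s(A2, B2) ≠ s(A3, B3) →
    yCond A1 B1 A2 B2 A3 B3 →
    Preceq (sreduce (yOut A1 B1 A2 B2 A3 B3)) Sig

/-- `Sig` is closed under the `M`-rule: every application of the `M`-rule to `Sig` is trivial. -/
def mClosed (Sig : Set (Sym2 (Set X))) : Prop :=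
  ∀ A1 B1 A2 B2 : Set X,
    s(A1, B1) ∈ Sig → s(A2, B2) ∈ Sig → s(A1, B1) ≠ s(A2, B2) →
    mCond A1 B1 A2 B2 →
    Preceq (sreduce (mOut A1 B1 A2 B2)) Sig

/-- A split closure sequence for `Sig` of length `n` with respect to the property `P` and
the non-trivial single-application relation `stepNT`: a strictly `⪯`-increasing sequence
in `P(X)` starting at `Sig` in which every term satisfying `P` is followed by the result
of one non-trivial application of the rule. -/
def IsClosureSeq (P : Set (Sym2 (Set X)) → Prop)
    (stepNT : Set (Sym2 (Set X)) → Set (Sym2 (Set X)) → Prop)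
    (Sig : Set (Sym2 (Set X))) (n : ℕ) (f : ℕ → Set (Sym2 (Set X))) : Prop :=
  f 0 = Sig ∧ (∀ i ≤ n, InPX (f i)) ∧
    (∀ i < n, P (f i) ∧ stepNT (f i) (f (i + 1)) ∧
      Preceq (f i) (f (i + 1)) ∧ f i ≠ f (i + 1))

/-- `cl` is a split closure of `Sig` (with `cl = none` playing the role of `ω`):
the last element of a split closure sequence for `Sig`, which either satisfies `P` and is
closed under the rule, or fails `P`, in which case it is replaced by `ω`. -/
def IsSplitClosure (P : Set (Sym2 (Set X)) → Prop)
    (stepNT : Set (Sym2 (Set X)) → Set (Sym2 (Set X)) → Prop)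
    (closed : Set (Sym2 (Set X)) → Prop)
    (Sig : Set (Sym2 (Set X))) (cl : Option (Set (Sym2 (Set X)))) : Prop :=
  ∃ (n : ℕ) (f : ℕ → Set (Sym2 (Set X))),
    IsClosureSeq P stepNT Sig n f ∧
    ((P (f n) ∧ closed (f n) ∧ cl = some (f n)) ∨ (¬ P (f n) ∧ cl = none))

/-- Split closure with respect to the `Y`-rule, `(P)` being weak compatibility. -/
def IsYClosure (Sig : Set (Sym2 (Set X))) (cl : Option (Set (Sym2 (Set X)))) : Prop :=
  IsSplitClosure WeaklyCompatible yStepNT yClosed Sig cl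

/-- Split closure with respect to the `M`-rule, `(P)` holding for all collections. -/
def IsMClosure (Sig : Set (Sym2 (Set X))) (cl : Option (Set (Sym2 (Set X)))) : Prop :=
  IsSplitClosure (fun _ => True) mStepNT mClosed Sig cl

/-- Split closure with respect to the combined `M/Y`-rule, `(P)` being weak compatibility. -/
def IsMYClosure (Sig : Set (Sym2 (Set X))) (cl : Option (Set (Sym2 (Set X)))) : Prop :=
  IsSplitClosure WeaklyCompatible
    (fun s s' => mStepNT s s' ∨ yStepNT s s') (fun s => mClosed s ∧ yClosed s) Sig cl

/-- `C` is an `X`-cycle: a connected graph on the vertex set `X` (`|X| ≥ 3`) in which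
every vertex has degree `2`. -/
def IsXCycle (C : SimpleGraph X) : Prop :=
  C.Connected ∧ 3 ≤ Nat.card X ∧ ∀ v : X, (C.neighborSet v).ncard = 2

/-- The partial split `S` is displayed by the `X`-cycle `C`: there are two distinct
edges of `C` whose deletion leaves one component containing one part of `S` and
another component containing the other part. -/
def DisplaysSplit (C : SimpleGraph X) (S : Sym2 (Set X)) : Prop :=
  ∃ A B : Set X, S = s(A, B) ∧
    ∃ e1 e2 : Sym2 X, e1 ∈ C.edgeSet ∧ e2 ∈ C.edgeSet ∧ e1 ≠ e2 ∧
      ∃ c1 c2 : (C.deleteEdges {e1, e2}).ConnectedComponent,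
        c1 ≠ c2 ∧ A ⊆ c1.supp ∧ B ⊆ c2.supp

/-- A collection of partial splits is displayed by `C` if each of its members is. -/
def DisplaysColl (C : SimpleGraph X) (Sig : Set (Sym2 (Set X))) : Prop :=
  ∀ S ∈ Sig, DisplaysSplit C S

/-- `cl ≠ ω` and the underlying collection is displayed by `C`. -/
def OptionDisplays (C : SimpleGraph X) (cl : Option (Set (Sym2 (Set X)))) : Prop :=
  ∃ Sig, cl = some Sig ∧ DisplaysColl C Sig

/-- The ground set `A ∪ B` of a partial split `A|B`. -/
def splitGround (S : Sym2 (Set X)) : Set X :=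
  ⋃₀ {A : Set X | A ∈ S}

/-- Membership in `P_ω(X) = P(X) ∪ {ω}`. -/
def InPOmega (x : Option (Set (Sym2 (Set X)))) : Prop :=
  x = none ∨ ∃ Sig, x = some Sig ∧ InPX Sig

/-- The order `⪯` on `P_ω(X)`, with `Sig ⪯ ω` for all `Sig` and `ω ⪯ ω`. -/
def PreceqO (x y : Option (Set (Sym2 (Set X)))) : Prop :=
  y = none ∨ ∃ Sig Sig', x = some Sig ∧ y = some Sig' ∧ Preceq Sig Sig'

/-- Split closure as a relation on `P_ω(X)`, with `⟨ω⟩ = ω`. -/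
def ClosO (cls : Set (Sym2 (Set X)) → Option (Set (Sym2 (Set X))) → Prop)
    (x y : Option (Set (Sym2 (Set X)))) : Prop :=
  (x = none ∧ y = none) ∨ ∃ Sig, x = some Sig ∧ cls Sig y

open SimpleGraph Finset

def cutE (C : SimpleGraph X) (V : Set X) : Set (Sym2 X) :=
  {e | ∃ x y, e = s(x, y) ∧ C.Adj x y ∧ x ∈ V ∧ y ∉ V}
/-- The set of edges of `C` crossing `V`. -/
lemma cutE_compl (C : SimpleGraph X) (V : Set X) : cutE C Vᶜ = cutE C V := by
  have h : ∀ W : Set X, cutE C Wᶜ ⊆ cutE C W := by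
    rintro W e ⟨x, y, rfl, hadj, hx, hy⟩
    exact ⟨y, x, Sym2.eq_swap, hadj.symm, by simpa using hy, by simpa using hx⟩
  refine subset_antisymm (h V) ?_
  have := h Vᶜ
  rwa [compl_compl] at this

lemma cutE_subset_edgeSet (C : SimpleGraph X) (V : Set X) : cutE C V ⊆ C.edgeSet := by
  rintro e ⟨x, y, rfl, hadj, -, -⟩
  exact hadj

/-- In a graph with no edge crossing `V`, reachability preserves sides. -/
lemma reach_side {G : SimpleGraph X} {V : Set X}
    (h : ∀ x y, G.Adj x y → (x ∈ V ↔ y ∈ V)) {u v : X} (hr : G.Reachable u v) :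
    (u ∈ V ↔ v ∈ V) := by
  obtain ⟨w⟩ := hr
  induction w with
  | nil => rfl
  | cons hadj p ih => exact (h _ _ hadj).trans ih

lemma deleteEdges_cut_no_cross (C : SimpleGraph X) (V : Set X) :
    ∀ x y, (C.deleteEdges (cutE C V)).Adj x y → (x ∈ V ↔ y ∈ V) := by
  intro x y hxy
  rw [deleteEdges_adj] at hxy
  obtain ⟨hadj, hne⟩ := hxy
  constructor
  · intro hx
    by_contra hy
    exact hne ⟨x, y, rfl, hadj, hx, hy⟩
  · intro hy
    by_contra hx
    exact hne ⟨y, x, Sym2.eq_swap, hadj.symm, hy, hx⟩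

lemma cutE_nonempty {C : SimpleGraph X} (hconn : C.Preconnected) {V : Set X} {u v : X}
    (hu : u ∈ V) (hv : v ∉ V) : (cutE C V).Nonempty := by
  obtain ⟨w⟩ := hconn u v
  clear hconn
  induction w with
  | nil => exact absurd hu hv
  | @cons a b c hadj p ih =>
    by_cases hb : b ∈ V
    · exact ih hb hv
    · exact ⟨s(a, b), a, b, rfl, hadj, hu, hb⟩

lemma cutE_submod (C : SimpleGraph X) (V W : Set X) [Finite X] :
    (cutE C (V ∩ W)).ncard + (cutE C (V ∪ W)).ncard ≤ (cutE C V).ncard + (cutE C W).ncard := by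
  have h1 : cutE C (V ∩ W) ∪ cutE C (V ∪ W) ⊆ cutE C V ∪ cutE C W := by
    rintro e (⟨x, y, rfl, hadj, hx, hy⟩ | ⟨x, y, rfl, hadj, hx, hy⟩)
    · by_cases hyV : y ∈ V
      · exact Or.inr ⟨x, y, rfl, hadj, hx.2, fun hyW => hy ⟨hyV, hyW⟩⟩
      · exact Or.inl ⟨x, y, rfl, hadj, hx.1, hyV⟩
    · rcases hx with h | h
      · exact Or.inl ⟨x, y, rfl, hadj, h, fun hyV => hy (Or.inl hyV)⟩
      · exact Or.inr ⟨x, y, rfl, hadj, h, fun hyW => hy (Or.inr hyW)⟩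
  have h2 : cutE C (V ∩ W) ∩ cutE C (V ∪ W) ⊆ cutE C V ∩ cutE C W := by
    rintro e ⟨⟨x, y, rfl, hadj, hx, hy⟩, ⟨p, q, hpq, hadj', hp, hq⟩⟩
    rcases Sym2.eq_iff.mp hpq with ⟨h1, h2⟩ | ⟨h1, h2⟩
    · subst h1; subst h2
      exact ⟨⟨x, y, rfl, hadj, hx.1, fun h => hq (Or.inl h)⟩,
        ⟨x, y, rfl, hadj, hx.2, fun h => hq (Or.inr h)⟩⟩
    · subst h1; subst h2
      exact absurd (Or.inl hx.1) hq
  calc (cutE C (V ∩ W)).ncard + (cutE C (V ∪ W)).ncard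
      = (cutE C (V ∩ W) ∪ cutE C (V ∪ W)).ncard + (cutE C (V ∩ W) ∩ cutE C (V ∪ W)).ncard := by
        rw [Set.ncard_union_add_ncard_inter _ _ (Set.toFinite _) (Set.toFinite _)]
    _ ≤ (cutE C V ∪ cutE C W).ncard + (cutE C V ∩ cutE C W).ncard := by
        exact Nat.add_le_add (Set.ncard_le_ncard h1 (Set.toFinite _))
          (Set.ncard_le_ncard h2 (Set.toFinite _))
    _ = (cutE C V).ncard + (cutE C W).ncard := by
        rw [Set.ncard_union_add_ncard_inter _ _ (Set.toFinite _) (Set.toFinite _)]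
lemma even_cutE [Fintype X] {C : SimpleGraph X} (hreg : ∀ v : X, (C.neighborSet v).ncard = 2)
    (V : Set X) : Even (cutE C V).ncard := by
  classical
  set R : Finset (X × X) := univ.filter (fun p => C.Adj p.1 p.2 ∧ p.1 ∈ V) with hRdef
  set Q : Finset (X × X) := R.filter (fun p => p.2 ∈ V) with hQdef
  set P : Finset (X × X) := R.filter (fun p => p.2 ∉ V) with hPdef
  -- R.card = 2 * |V|
  have hRcard : R.card = 2 * V.toFinset.card := by
    have := Finset.card_eq_sum_card_fiberwise (s := R) (t := V.toFinset) (f := Prod.fst)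
      (by rintro p hp; rw [Finset.mem_coe, hRdef, mem_filter] at hp; simpa using hp.2.2)
    rw [this]
    rw [Finset.sum_congr rfl (fun v hv => ?_), Finset.sum_const, smul_eq_mul, mul_comm]
    · show (R.filter (fun p => p.1 = v)).card = 2
      have hbij : (R.filter (fun p => p.1 = v)).card = (C.neighborFinset v).card := by
        apply Finset.card_bij (fun p _ => p.2)
        · rintro p hp
          simp only [hRdef, mem_filter, mem_univ, true_and] at hp
          rw [mem_neighborFinset, ← hp.2]
          exact hp.1.1
        · rintro p hp q hq hpq
          simp only [hRdef, mem_filter] at hp hq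
          exact Prod.ext (hp.2.trans hq.2.symm) hpq
        · intro y hy
          rw [mem_neighborFinset] at hy
          refine ⟨(v, y), ?_, rfl⟩
          simp only [hRdef, mem_filter, mem_univ, true_and]
          exact ⟨⟨hy, Set.mem_toFinset.mp hv⟩, trivial⟩
      rw [hbij, show C.neighborFinset v = (C.neighborSet v).toFinset from rfl,
        ← Set.ncard_eq_toFinset_card']
      exact hreg v
  -- |Q| even
  have hQeven : Even Q.card := by
    let f := (Fintype.equivFin X)
    set Q1 : Finset (X × X) := Q.filter (fun p => f p.1 < f p.2) with hQ1
    set Q2 : Finset (X × X) := Q.filter (fun p => ¬ f p.1 < f p.2) with hQ2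
    have hsplit : Q1.card + Q2.card = Q.card := Finset.card_filter_add_card_filter_not _
    have hQmem : ∀ p ∈ Q, C.Adj p.1 p.2 ∧ p.1 ∈ V ∧ p.2 ∈ V := by
      intro p hp
      simp only [hQdef, hRdef, mem_filter, mem_univ, true_and] at hp
      exact ⟨hp.1.1, hp.1.2, hp.2⟩
    have hQswap : ∀ p ∈ Q, Prod.swap p ∈ Q := by
      intro p hp
      obtain ⟨h1, h2, h3⟩ := hQmem p hp
      simp only [hQdef, hRdef, mem_filter, mem_univ, true_and]
      exact ⟨⟨h1.symm, h3⟩, h2⟩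
    have hcards : Q1.card = Q2.card := by
      apply Finset.card_bij (fun p _ => Prod.swap p)
      · intro p hp
        simp only [hQ1, mem_filter] at hp
        simp only [hQ2, mem_filter]
        refine ⟨hQswap p hp.1, by simp [Prod.swap]; omega⟩
      · intro p hp q hq hpq
        exact Prod.swap_injective hpq
      · intro p hp
        simp only [hQ2, mem_filter] at hp
        refine ⟨Prod.swap p, ?_, by simp⟩
        simp only [hQ1, mem_filter]
        refine ⟨hQswap p hp.1, ?_⟩
        have hne : p.1 ≠ p.2 := (hQmem p hp.1).1.ne
        have : f p.1 ≠ f p.2 := fun h => hne (f.injective h)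
        simp only [Prod.fst_swap, Prod.snd_swap]
        omega
    rw [← hsplit, hcards]
    exact Even.add_self _
  -- cutE ncard = |P|
  have hPcard : (cutE C V).ncard = P.card := by
    have himg : cutE C V = (fun p : X × X => s(p.1, p.2)) '' (P : Set (X × X)) := by
      ext e
      constructor
      · rintro ⟨x, y, rfl, hadj, hx, hy⟩
        exact ⟨(x, y), by simp [hPdef, hRdef, hadj, hx, hy], rfl⟩
      · rintro ⟨p, hp, rfl⟩
        simp only [hPdef, hRdef, coe_filter, Set.mem_setOf_eq, mem_filter, mem_univ,
          true_and] at hp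
        exact ⟨p.1, p.2, rfl, hp.1.1, hp.1.2, hp.2⟩
    rw [himg, Set.ncard_image_of_injOn, Set.ncard_coe_finset]
    rintro ⟨x, y⟩ hxy ⟨x', y'⟩ hxy' hs
    simp only [hPdef, hRdef, coe_filter, Set.mem_setOf_eq, mem_filter, mem_univ, true_and] at hxy hxy'
    rcases Sym2.eq_iff.mp hs with ⟨rfl, rfl⟩ | ⟨rfl, rfl⟩
    · rfl
    · exact absurd hxy.1.2 hxy'.2
  -- conclude
  have hPQ : Q.card + P.card = R.card := Finset.card_filter_add_card_filter_not _
  rw [hPcard]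
  have : Even R.card := ⟨V.toFinset.card, by omega⟩
  rw [← hPQ] at this
  rcases hQeven with ⟨a, ha⟩
  rcases this with ⟨b, hb⟩
  exact ⟨b - a, by omega⟩

section Core
variable [Fintype X] {C : SimpleGraph X}

lemma two_le_cutE (hconn : C.Preconnected) (hreg : ∀ v : X, (C.neighborSet v).ncard = 2)
    {Z : Set X} (h1 : Z.Nonempty) (h2 : Zᶜ.Nonempty) : 2 ≤ (cutE C Z).ncard := by
  obtain ⟨a, ha⟩ := h1
  obtain ⟨b, hb⟩ := h2
  have hne := cutE_nonempty hconn ha hb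
  have hev := even_cutE hreg Z
  have h0 : 0 < (cutE C Z).ncard := (Set.ncard_pos (Set.toFinite _)).mpr hne
  obtain ⟨k, hk⟩ := hev
  omega

/-- If the cut of `V` has exactly two edges, then `V` lies in a single component
of `C` minus those edges. -/
lemma two_cut_reach (hconn : C.Preconnected) (hreg : ∀ v : X, (C.neighborSet v).ncard = 2)
    {V : Set X} (hcut : (cutE C V).ncard = 2) {u v : X} (hu : u ∈ V) (hv : v ∈ V) :
    (C.deleteEdges (cutE C V)).Reachable u v := by
  classical
  set C' := C.deleteEdges (cutE C V) with hC'
  by_contra hnr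
  set W : Set X := (C'.connectedComponentMk u).supp with hW
  set W' : Set X := (C'.connectedComponentMk v).supp with hW'
  have hsupp : ∀ x : X, x ∈ W ↔ C'.Reachable x u := by
    intro x; rw [hW, ConnectedComponent.mem_supp_iff, ConnectedComponent.eq]
  have hsupp' : ∀ x : X, x ∈ W' ↔ C'.Reachable x v := by
    intro x; rw [hW', ConnectedComponent.mem_supp_iff, ConnectedComponent.eq]
  have huW : u ∈ W := (hsupp u).mpr (Reachable.refl u)
  have hvW' : v ∈ W' := (hsupp' v).mpr (Reachable.refl v)
  have hdisj : ∀ x, x ∈ W → x ∉ W' := by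
    intro x hx hx'
    exact hnr (((hsupp x).mp hx).symm.trans ((hsupp' x).mp hx'))
  -- components stay within V
  have hside : ∀ x y : X, C'.Adj x y → (x ∈ V ↔ y ∈ V) := deleteEdges_cut_no_cross C V
  have hWV : W ⊆ V := fun x hx => (reach_side hside ((hsupp x).mp hx)).mpr hu
  have hW'V : W' ⊆ V := fun x hx => (reach_side hside ((hsupp' x).mp hx)).mpr hv
  have hvnW : v ∉ W := fun h => hnr ((hsupp v).mp h).symm
  have hunW' : u ∉ W' := fun h => hnr ((hsupp' u).mp h)
  -- cut of a component supp is contained in cut V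
  have hcutsub : ∀ (w : X), cutE C ((C'.connectedComponentMk w).supp) ⊆ cutE C V := by
    rintro w e ⟨x, y, rfl, hadj, hx, hy⟩
    by_contra he
    have hadj' : C'.Adj x y := by
      rw [hC', deleteEdges_adj]; exact ⟨hadj, he⟩
    rw [ConnectedComponent.mem_supp_iff] at hx hy
    exact hy (by rw [← hx, ConnectedComponent.eq]; exact hadj'.symm.reachable)
  have hge2 : ∀ (Z : Set X), Z.Nonempty → Zᶜ.Nonempty → 2 ≤ (cutE C Z).ncard :=
    fun Z h1 h2 => two_le_cutE hconn hreg h1 h2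
  have hWcut : cutE C W = cutE C V := by
    apply Set.eq_of_subset_of_ncard_le (hcutsub u)
    rw [hcut]; exact hge2 W ⟨u, huW⟩ ⟨v, hvnW⟩
  have hW'cut : cutE C W' = cutE C V := by
    have : W' = (C'.connectedComponentMk v).supp := hW'
    rw [this] at *
    apply Set.eq_of_subset_of_ncard_le (hcutsub v)
    rw [hcut]; exact hge2 _ ⟨v, hvW'⟩ ⟨u, hunW'⟩
  -- derive contradiction from any cut edge
  obtain ⟨e, he⟩ : (cutE C V).Nonempty := by
    rw [← Set.ncard_pos (Set.toFinite _)]; omega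
  obtain ⟨x, y, rfl, hadj, hx, hy⟩ : e ∈ cutE C W := hWcut.symm ▸ he
  obtain ⟨p, q, hpq, hadj', hp, hq⟩ : s(x, y) ∈ cutE C W' := hW'cut.symm ▸ he
  have hxy : x ∈ V ∧ y ∈ V := by
    rcases Sym2.eq_iff.mp hpq with ⟨h1, h2⟩ | ⟨h1, h2⟩
    · exact absurd (h1 ▸ hp) (hdisj x hx)
    · exact ⟨hWV hx, hW'V (by rw [h2]; exact hp)⟩
  obtain ⟨a, b, hab, -, ha, hb⟩ := he
  rcases Sym2.eq_iff.mp hab with ⟨h1, h2⟩ | ⟨h1, h2⟩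
  · exact hb (by rw [← h2]; exact hxy.2)
  · exact hb (by rw [← h1]; exact hxy.1)

lemma arc_displays (hconn : C.Preconnected) (hreg : ∀ v : X, (C.neighborSet v).ncard = 2)
    {V A B : Set X} (hcut : (cutE C V).ncard = 2)
    (hA : A ⊆ V) (hB : B ⊆ Vᶜ) (hAne : A.Nonempty) (hBne : B.Nonempty) :
    DisplaysSplit C s(A, B) := by
  obtain ⟨g1, g2, hg12, hg⟩ := Set.ncard_eq_two.mp hcut
  obtain ⟨a, ha⟩ := hAne
  obtain ⟨b, hb⟩ := hBne
  have hdel : C.deleteEdges {g1, g2} = C.deleteEdges (cutE C V) := by rw [hg]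
  have hreachV : ∀ x y : X, x ∈ V → y ∈ V → (C.deleteEdges {g1, g2}).Reachable x y := by
    intro x y hx hy
    rw [hdel]
    exact two_cut_reach hconn hreg hcut hx hy
  have hreachVc : ∀ x y : X, x ∈ Vᶜ → y ∈ Vᶜ → (C.deleteEdges {g1, g2}).Reachable x y := by
    intro x y hx hy
    have hcut' : (cutE C Vᶜ).ncard = 2 := by rw [cutE_compl]; exact hcut
    have := two_cut_reach hconn hreg hcut' hx hy
    rwa [cutE_compl, ← hdel] at this
  refine ⟨A, B, rfl, g1, g2, ?_, ?_, hg12,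
    (C.deleteEdges {g1, g2}).connectedComponentMk a,
    (C.deleteEdges {g1, g2}).connectedComponentMk b, ?_, ?_, ?_⟩
  · exact cutE_subset_edgeSet C V (hg ▸ (Set.mem_insert g1 {g2}))
  · exact cutE_subset_edgeSet C V (hg ▸ (Set.mem_insert_of_mem g1 rfl))
  · intro heq
    rw [ConnectedComponent.eq] at heq
    have := reach_side (by rw [hdel]; exact deleteEdges_cut_no_cross C V) heq
    exact hB hb (this.mp (hA ha))
  · intro x hx
    rw [ConnectedComponent.mem_supp_iff, ConnectedComponent.eq]
    exact hreachV x a (hA hx) (hA ha)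
  · intro x hx
    rw [ConnectedComponent.mem_supp_iff, ConnectedComponent.eq]
    exact hreachVc x b (hB hx) (hB hb)

lemma displays_arc (hconn : C.Preconnected) (hreg : ∀ v : X, (C.neighborSet v).ncard = 2)
    {A B : Set X} (hd : DisplaysSplit C s(A, B)) (hAne : A.Nonempty) (hBne : B.Nonempty) :
    ∃ V : Set X, A ⊆ V ∧ B ⊆ Vᶜ ∧ (cutE C V).ncard = 2 := by
  obtain ⟨A', B', hAB, e1, e2, he1, he2, hne, c1, c2, hc, hA', hB'⟩ := hd
  have key : ∀ (c d : (C.deleteEdges {e1, e2}).ConnectedComponent), c ≠ d →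
      A ⊆ c.supp → B ⊆ d.supp → ∃ V : Set X, A ⊆ V ∧ B ⊆ Vᶜ ∧ (cutE C V).ncard = 2 := by
    intro c d hcd hAc hBd
    refine ⟨c.supp, hAc, ?_, ?_⟩
    · intro x hx hxc
      rw [ConnectedComponent.mem_supp_iff] at hxc
      have := (hBd hx)
      rw [ConnectedComponent.mem_supp_iff] at this
      exact hcd (hxc ▸ this ▸ rfl)
    · have hsub : cutE C c.supp ⊆ {e1, e2} := by
        rintro e ⟨x, y, rfl, hadj, hx, hy⟩
        by_contra he
        have hadj' : (C.deleteEdges {e1, e2}).Adj x y := by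
          rw [deleteEdges_adj]; exact ⟨hadj, he⟩
        rw [ConnectedComponent.mem_supp_iff] at hx hy
        exact hy (by rw [← hx, ConnectedComponent.eq]; exact hadj'.symm.reachable)
      have hle : (cutE C c.supp).ncard ≤ 2 := by
        have := Set.ncard_le_ncard hsub (Set.toFinite _)
        rwa [Set.ncard_pair hne] at this
      have hge : 2 ≤ (cutE C c.supp).ncard := by
        obtain ⟨a, ha⟩ := hAne
        obtain ⟨b, hb⟩ := hBne
        refine two_le_cutE hconn hreg ⟨a, hAc ha⟩ ⟨b, fun hbc => ?_⟩
        rw [ConnectedComponent.mem_supp_iff] at hbc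
        have := hBd hb
        rw [ConnectedComponent.mem_supp_iff] at this
        exact hcd (hbc ▸ this ▸ rfl)
      omega
  rcases Sym2.eq_iff.mp hAB with ⟨h1, h2⟩ | ⟨h1, h2⟩
  · exact key c1 c2 hc (h1 ▸ hA') (h2 ▸ hB')
  · exact key c2 c1 (Ne.symm hc) (h1 ▸ hB') (h2 ▸ hA')

end Core

lemma partialSplit_pair {A B : Set X} (h : IsPartialSplit s(A, B)) :
    A.Nonempty ∧ B.Nonempty ∧ Disjoint A B := by
  obtain ⟨A', B', hAB, h1, h2, h3⟩ := h
  rcases Sym2.eq_iff.mp hAB with ⟨rfl, rfl⟩ | ⟨rfl, rfl⟩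
  · exact ⟨h1, h2, h3⟩
  · exact ⟨h2, h1, h3.symm⟩

lemma splitExtends_refl' (A B : Set X) : SplitExtends s(A, B) s(A, B) :=
  ⟨A, B, A, B, rfl, rfl, subset_rfl, subset_rfl⟩

lemma splitExtends_trans {S T R : Sym2 (Set X)} (h1 : SplitExtends S T)
    (h2 : SplitExtends T R) : SplitExtends S R := by
  obtain ⟨A, B, C, D, rfl, hT, hCA, hDB⟩ := h1
  obtain ⟨C', D', E, F, hT', rfl, hEC, hFD⟩ := h2
  rcases Sym2.eq_iff.mp (hT.symm.trans hT') with ⟨rfl, rfl⟩ | ⟨rfl, rfl⟩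
  · exact ⟨A, B, E, F, rfl, rfl, hEC.trans hCA, hFD.trans hDB⟩
  · exact ⟨B, A, E, F, Sym2.eq_swap, rfl, hEC.trans hDB, hFD.trans hCA⟩

lemma splitGround_pair (A B : Set X) : splitGround s(A, B) = A ∪ B := by
  ext x
  simp [splitGround, Sym2.mem_iff]

lemma ext_ground_mono {S T : Sym2 (Set X)} (hT : IsPartialSplit T)
    (he : SplitExtends T S) :
    splitGround S ⊆ splitGround T ∧ (splitGround S = splitGround T → S = T) := by
  obtain ⟨A, B, Cs, D, rfl, rfl, hCA, hDB⟩ := he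
  obtain ⟨-, -, hdAB⟩ := partialSplit_pair hT
  rw [splitGround_pair, splitGround_pair]
  constructor
  · exact Set.union_subset_union hCA hDB
  · intro heq
    have hAC : A ⊆ Cs := by
      intro a ha
      have : a ∈ Cs ∪ D := by rw [heq]; exact Set.mem_union_left B ha
      rcases this with h | h
      · exact h
      · exact absurd (hdAB.ne_of_mem ha (hDB h)) (fun hf => hf rfl)
    have hBD : B ⊆ D := by
      intro b hb
      have : b ∈ Cs ∪ D := by rw [heq]; exact Set.mem_union_right A hb
      rcases this with h | h
      · exact absurd (hdAB.ne_of_mem (hCA h) hb) (fun hf => hf rfl)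
      · exact h
    rw [subset_antisymm hCA hAC, subset_antisymm hDB hBD]

lemma exists_max_ext [Finite X] {U : Set (Sym2 (Set X))}
    (hU : ∀ T ∈ U, IsPartialSplit T) {S : Sym2 (Set X)} (hS : S ∈ U) :
    ∃ T ∈ sreduce U, SplitExtends T S := by
  classical
  set s : Set (Sym2 (Set X)) := {T | T ∈ U ∧ SplitExtends T S} with hs
  have hfin : s.Finite := Set.toFinite _
  have hne : s.Nonempty := by
    obtain ⟨A, B, hAB, -, -, -⟩ := hU S hS
    exact ⟨S, hS, by rw [hAB]; exact splitExtends_refl' A B⟩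
  obtain ⟨T, hTs, hmax⟩ := Set.Finite.exists_maximalFor
    (fun T => (splitGround T).ncard) s hfin hne
  refine ⟨T, ⟨hTs.1, ?_⟩, hTs.2⟩
  rintro ⟨T', hT'U, hne', hext⟩
  have hT's : T' ∈ s := ⟨hT'U, splitExtends_trans hext hTs.2⟩
  obtain ⟨hsub, himp⟩ := ext_ground_mono (hU T' hT'U) hext
  have hle : (splitGround T).ncard ≤ (splitGround T').ncard :=
    Set.ncard_le_ncard hsub (Set.toFinite _)
  have heq := hmax hT's hle
  exact hne' (himp (Set.eq_of_subset_of_ncard_le hsub heq (Set.toFinite _))).symm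

lemma displays_of_extends {C : SimpleGraph X} {S T : Sym2 (Set X)}
    (he : SplitExtends T S) (hd : DisplaysSplit C T) : DisplaysSplit C S := by
  obtain ⟨A, B, Cs, D, hTAB, rfl, hCA, hDB⟩ := he
  obtain ⟨A', B', hT', e1, e2, he1, he2, hne, c1, c2, hc, hA', hB'⟩ := hd
  rcases Sym2.eq_iff.mp (hTAB.symm.trans hT') with ⟨rfl, rfl⟩ | ⟨rfl, rfl⟩
  · exact ⟨Cs, D, rfl, e1, e2, he1, he2, hne, c1, c2, hc,
      hCA.trans hA', hDB.trans hB'⟩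
  · exact ⟨Cs, D, rfl, e1, e2, he1, he2, hne, c2, c1, hc.symm,
      hCA.trans hB', hDB.trans hA'⟩

/-- if `Σ, Σ' ∈ P(X)`, `C` is an `X`-cycle and `Σ'` is obtained from `Σ` by a
single application of the `M`-rule, then `Σ` is displayed by `C` iff `Σ'` is displayed by `C`. -/
theorem statement7 {X : Type*} [Fintype X] (Sig Sig' : Set (Sym2 (Set X))) (C : SimpleGraph X)
    (hSig : InPX Sig) (hSig' : InPX Sig') (hC : IsXCycle C)
    (hstep : mStep Sig Sig') :
    DisplaysColl C Sig ↔ DisplaysColl C Sig' := by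
  obtain ⟨A1, B1, A2, B2, h1, h2, hne12, hm, hSig'eq⟩ := hstep
  have hconn : C.Preconnected := hC.1.preconnected
  have hreg : ∀ v : X, (C.neighborSet v).ncard = 2 := hC.2.2
  obtain ⟨hA1ne, hB1ne, hd1⟩ := partialSplit_pair (hSig.1 _ h1)
  obtain ⟨hA2ne, hB2ne, hd2⟩ := partialSplit_pair (hSig.1 _ h2)
  set U : Set (Sym2 (Set X)) := Sig ∪ mOut A1 B1 A2 B2 with hU
  have hUps : ∀ T ∈ U, IsPartialSplit T := by
    rintro T (hT | hT)
    · exact hSig.1 T hT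
    · simp only [mOut, Set.mem_insert_iff, Set.mem_singleton_iff] at hT
      rcases hT with rfl | rfl | rfl | rfl
      · exact hSig.1 _ h1
      · exact hSig.1 _ h2
      · exact ⟨A1 ∩ A2, B1 ∪ B2, rfl, hm.1, (hB1ne.mono Set.subset_union_left), Set.disjoint_union_right.mpr
          ⟨hd1.mono_left Set.inter_subset_left, hd2.mono_left Set.inter_subset_right⟩⟩
      · exact ⟨B1 ∩ B2, A1 ∪ A2, rfl, hm.2, (hA1ne.mono Set.subset_union_left), Set.disjoint_union_right.mpr
          ⟨(hd1.symm).mono_left Set.inter_subset_left,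
            (hd2.symm).mono_left Set.inter_subset_right⟩⟩
  constructor
  · -- forward
    intro hd S' hS'
    rw [hSig'eq] at hS'
    have hS'U : S' ∈ U := hS'.1
    -- get the two arcs
    obtain ⟨V, hA1V, hB1V, hVcut⟩ := displays_arc hconn hreg (hd _ h1) hA1ne hB1ne
    obtain ⟨W, hA2W, hB2W, hWcut⟩ := displays_arc hconn hreg (hd _ h2) hA2ne hB2ne
    have hiu : (cutE C (V ∩ W)).ncard = 2 ∧ (cutE C (V ∪ W)).ncard = 2 := by
      have hsm := cutE_submod C V W
      rw [hVcut, hWcut] at hsm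
      have hg1 : 2 ≤ (cutE C (V ∩ W)).ncard := by
        obtain ⟨a, ha⟩ := hm.1
        obtain ⟨b, hb⟩ := hB1ne
        refine two_le_cutE hconn hreg ⟨a, hA1V ha.1, hA2W ha.2⟩ ⟨b, fun hbm => ?_⟩
        exact hB1V hb hbm.1
      have hg2 : 2 ≤ (cutE C (V ∪ W)).ncard := by
        obtain ⟨a, ha⟩ := hA1ne
        obtain ⟨b, hb⟩ := hm.2
        refine two_le_cutE hconn hreg ⟨a, Or.inl (hA1V ha)⟩ ⟨b, fun hbm => ?_⟩
        rcases hbm with h | h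
        · exact hB1V hb.1 h
        · exact hB2W hb.2 h
      omega
    rcases hS'U with hS'Sig | hS'm
    · exact hd _ hS'Sig
    · simp only [mOut, Set.mem_insert_iff, Set.mem_singleton_iff] at hS'm
      rcases hS'm with rfl | rfl | rfl | rfl
      · exact hd _ h1
      · exact hd _ h2
      · refine arc_displays hconn hreg hiu.1 (fun x hx => ⟨hA1V hx.1, hA2W hx.2⟩)
          ?_ hm.1 (hB1ne.mono Set.subset_union_left)
        rintro x (hx | hx) hxm
        · exact hB1V hx hxm.1
        · exact hB2W hx hxm.2
      · have hcut' : (cutE C ((V ∪ W)ᶜ)).ncard = 2 := by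
          rw [cutE_compl]; exact hiu.2
        refine arc_displays hconn hreg hcut'
          (fun x hx hxm => hxm.elim (fun h => hB1V hx.1 h) (fun h => hB2W hx.2 h))
          ?_ hm.2 (hA1ne.mono Set.subset_union_left)
        rintro x (hx | hx) <;> rw [compl_compl]
        · exact Or.inl (hA1V hx)
        · exact Or.inr (hA2W hx)
  · -- backward
    intro hd S hSmem
    obtain ⟨T, hTred, htext⟩ := exists_max_ext hUps (Or.inl hSmem : S ∈ U)
    rw [← hSig'eq] at hTred
    exact displays_of_extends htext (hd T hTred)
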